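/- In a 3-connected 3-regular graph, every nontrivial 3-cut is a matching, and any two 3-cuts are laminar (non-crossing). -/

import Mathlib

/-- The underlying simple graph of a multigraph given by `ends`. -/
def toSimple {V E : Type} (ends : E → Sym2 V) : SimpleGraph V where
  Adj u w := u ≠ w ∧ ∃ e, ends e = s(u, w)
  symm := by
    constructor
    rintro u w ⟨hne, e, he⟩
    exact ⟨hne.symm, e, by rw [he]; exact Sym2.eq_swap⟩
  loopless := by constructor; rintro u ⟨hne, -⟩; exact hne rfl

/-- The edge cut `∂(X)`. -/
def Cut {V E : Type} (ends : E → Sym2 V) (X : Set V) : Set E :=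
  {e | ∃ u ∈ X, ∃ w, w ∉ X ∧ ends e = s(u, w)}

/-- Degree of a vertex (counting multiplicities). -/
noncomputable def deg {V E : Type} (ends : E → Sym2 V) (v : V) : ℕ :=
  {e | v ∈ ends e}.ncard

/-- `G` is 3-connected: connected, and removing any set of at most two vertices
(that does not remove everything) leaves it connected. -/
def ThreeConnected {V E : Type} (ends : E → Sym2 V) : Prop :=
  (toSimple ends).Connected ∧
    ∀ S : Set V, S.ncard ≤ 2 → Sᶜ.Nonempty → ((toSimple ends).induce Sᶜ).Connected

open Classical

section proofs
variable {V E : Type}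

lemma cut_compl (ends : E → Sym2 V) (X : Set V) : Cut ends Xᶜ = Cut ends X := by
  ext e
  constructor
  · rintro ⟨u, hu, w, hw, he⟩
    exact ⟨w, by simpa using hw, u, by simpa using hu, by rw [he]; exact Sym2.eq_swap⟩
  · rintro ⟨u, hu, w, hw, he⟩
    exact ⟨w, by simpa using hw, u, by simpa using hu, by rw [he]; exact Sym2.eq_swap⟩

lemma mem_cut_iff {ends : E → Sym2 V} {e : E} {a b : V} (hab : ends e = s(a, b)) (Z : Set V) :
    e ∈ Cut ends Z ↔ (a ∈ Z ∧ b ∉ Z) ∨ (b ∈ Z ∧ a ∉ Z) := by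
  constructor
  · rintro ⟨u, hu, w, hw, he⟩
    rw [hab, Sym2.eq_iff] at he
    rcases he with ⟨rfl, rfl⟩ | ⟨rfl, rfl⟩
    · exact Or.inl ⟨hu, hw⟩
    · exact Or.inr ⟨hu, hw⟩
  · rintro (⟨ha, hb⟩ | ⟨hb, ha⟩)
    · exact ⟨a, ha, b, hb, hab⟩
    · exact ⟨b, hb, a, ha, by rw [hab]; exact Sym2.eq_swap⟩

lemma cut_unique {ends : E → Sym2 V} {e : E} {Z : Set V} (he : e ∈ Cut ends Z)
    {v v' : V} (hv : v ∈ ends e) (hvZ : v ∈ Z) (hv' : v' ∈ ends e) (hvZ' : v' ∈ Z) : v = v' := by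
  obtain ⟨u, hu, w, hw, huw⟩ := he
  rw [huw, Sym2.mem_iff] at hv hv'
  rcases hv with rfl | rfl
  · rcases hv' with rfl | rfl
    · rfl
    · exact absurd hvZ' hw
  · exact absurd hvZ hw

lemma reach_invar (ends : E → Sym2 V) (S : Set V) (P : V → Prop)
    (hP : ∀ a b : V, a ∈ Sᶜ → b ∈ Sᶜ → (toSimple ends).Adj a b → P a → P b)
    (u v : ↥Sᶜ) (hr : ((toSimple ends).induce Sᶜ).Reachable u v) (hu : P u) : P v := by
  obtain ⟨w⟩ := hr
  induction w with
  | nil => exact hu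
  | cons h p ih => exact ih (hP _ _ (Subtype.mem _) (Subtype.mem _) h hu)

lemma key [Fintype V] [Fintype E] (ends : E → Sym2 V) (hreg : ∀ v, deg ends v = 3)
    (h3c : ThreeConnected ends) (X : Set V) (hcut : (Cut ends X).ncard ≤ 2)
    (hXc : Xᶜ.Nonempty) (v : V) (hv : v ∈ X) (hvfree : ∀ e ∈ Cut ends X, v ∉ ends e) :
    False := by
  have hEne : Nonempty E := by
    have h3 : ({e | v ∈ ends e} : Set E).ncard ≠ 0 := by have := hreg v; unfold deg at this; omega
    obtain ⟨e, -⟩ := Set.nonempty_of_ncard_ne_zero h3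
    exact ⟨e⟩
  set S : Set V := {u | u ∈ X ∧ ∃ e ∈ Cut ends X, u ∈ ends e} with hS
  set f : V → E := fun u =>
    if h : ∃ e ∈ Cut ends X, u ∈ ends e then h.choose else Classical.arbitrary E with hf
  have hfspec : ∀ u ∈ S, f u ∈ Cut ends X ∧ u ∈ ends (f u) := by
    rintro u ⟨-, hu⟩
    simp only [hf, dif_pos hu]
    exact hu.choose_spec
  have hScard : S.ncard ≤ 2 := by
    refine le_trans (Set.ncard_le_ncard_of_injOn f (fun u hu => (hfspec u hu).1)
      ?_ (Set.toFinite _)) hcut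
    intro u hu u' hu' heq
    obtain ⟨h1, h2⟩ := hfspec u hu
    obtain ⟨h1', h2'⟩ := hfspec u' hu'
    exact cut_unique h1 h2 hu.1 (heq ▸ h2') hu'.1
  have hvS : v ∈ Sᶜ := by
    rintro ⟨-, e, he, hve⟩
    exact hvfree e he hve
  obtain ⟨w, hw⟩ := hXc
  have hwS : w ∈ Sᶜ := by rintro ⟨hwX, -⟩; exact hw hwX
  have hconn := h3c.2 S hScard ⟨v, hvS⟩
  have hreach := hconn.preconnected ⟨v, hvS⟩ ⟨w, hwS⟩
  refine hw (reach_invar ends S (· ∈ X) ?_ _ _ hreach hv)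
  rintro a b ha hb ⟨hne, e, he⟩ haX
  by_contra hbX
  exact ha ⟨haX, e, (mem_cut_iff he X).mpr (Or.inl ⟨haX, hbX⟩), he ▸ Sym2.mem_mk_left a b⟩

lemma exists_ends_eq (ends : E → Sym2 V) (hloop : ∀ e, ¬ (ends e).IsDiag) (e : E) :
    ∃ a b, a ≠ b ∧ ends e = s(a, b) := by
  obtain ⟨⟨a, b⟩, hab⟩ := Quot.exists_rep (ends e)
  refine ⟨a, b, ?_, hab.symm⟩
  intro h
  exact hloop e (by rw [← hab, h]; exact Sym2.isDiag_iff_proj_eq.mpr rfl)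

lemma singleton_cut [Fintype E] (ends : E → Sym2 V) (hloop : ∀ e, ¬ (ends e).IsDiag)
    (hreg : ∀ v, deg ends v = 3) (x : V) : 3 ≤ (Cut ends ({x} : Set V)).ncard := by
  have hsub : {e | x ∈ ends e} ⊆ Cut ends {x} := by
    intro e he
    obtain ⟨a, b, hne, hab⟩ := exists_ends_eq ends hloop e
    rw [Set.mem_setOf_eq, hab, Sym2.mem_iff] at he
    rcases he with rfl | rfl
    · exact (mem_cut_iff hab _).mpr (Or.inl ⟨rfl, fun h => hne (Set.mem_singleton_iff.mp h).symm⟩)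
    · exact (mem_cut_iff hab _).mpr (Or.inr ⟨rfl, fun h => hne (Set.mem_singleton_iff.mp h)⟩)
  calc 3 = deg ends x := (hreg x).symm
    _ ≤ _ := Set.ncard_le_ncard hsub (Set.toFinite _)

lemma edgeconn [Fintype V] [Fintype E] (ends : E → Sym2 V) (hloop : ∀ e, ¬ (ends e).IsDiag)
    (hreg : ∀ v, deg ends v = 3) (h3c : ThreeConnected ends) (X : Set V)
    (hX : X.Nonempty) (hXc : Xᶜ.Nonempty) : 3 ≤ (Cut ends X).ncard := by
  by_contra hlt
  push_neg at hlt
  have hcut : (Cut ends X).ncard ≤ 2 := by omega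
  have hcutc : (Cut ends Xᶜ).ncard ≤ 2 := by rw [cut_compl]; exact hcut
  -- every vertex is incident to a cut edge
  have hAX : ∀ v ∈ X, ∃ e ∈ Cut ends X, v ∈ ends e := by
    intro v hv
    by_contra h
    push_neg at h
    exact key ends hreg h3c X hcut hXc v hv h
  have hAXc : ∀ v ∈ Xᶜ, ∃ e ∈ Cut ends X, v ∈ ends e := by
    intro v hv
    by_contra h
    push_neg at h
    refine key ends hreg h3c Xᶜ hcutc (by rw [compl_compl]; exact hX) v hv ?_
    rw [cut_compl]; exact h
  -- |X| ≤ 2 and |Xᶜ| ≤ 2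
  have hEne : Nonempty E := by
    obtain ⟨v, hv⟩ := hX
    obtain ⟨e, -⟩ := hAX v hv
    exact ⟨e⟩
  set f : V → E := fun u =>
    if h : ∃ e ∈ Cut ends X, u ∈ ends e then h.choose else Classical.arbitrary E with hf
  have hfspec : ∀ u, (∃ e ∈ Cut ends X, u ∈ ends e) → f u ∈ Cut ends X ∧ u ∈ ends (f u) := by
    intro u hu
    simp only [hf, dif_pos hu]
    exact hu.choose_spec
  have hinj : ∀ (Z : Set V), (∀ v ∈ Z, ∃ e ∈ Cut ends X, v ∈ ends e) →
      (∀ v ∈ Z, v ∈ X) → Z.ncard ≤ 2 := by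
    intro Z hZ hZX
    refine le_trans (Set.ncard_le_ncard_of_injOn f
      (fun u hu => (hfspec u (hZ u hu)).1) ?_ (Set.toFinite _)) hcut
    intro u hu u' hu' heq
    obtain ⟨h1, h2⟩ := hfspec u (hZ u hu)
    obtain ⟨h1', h2'⟩ := hfspec u' (hZ u' hu')
    exact cut_unique h1 h2 (hZX u hu) (heq ▸ h2') (hZX u' hu')
  have hXle : X.ncard ≤ 2 := hinj X hAX (fun _ h => h)
  have hXcle : Xᶜ.ncard ≤ 2 := by
    refine le_trans (Set.ncard_le_ncard_of_injOn f
      (fun u hu => (hfspec u (hAXc u hu)).1) ?_ (Set.toFinite _)) hcut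
    intro u hu u' hu' heq
    obtain ⟨h1, h2⟩ := hfspec u (hAXc u hu)
    obtain ⟨h1', h2'⟩ := hfspec u' (hAXc u' hu')
    rw [← cut_compl ends X] at h1
    exact cut_unique h1 h2 hu (heq ▸ h2') hu'
  have hX1 : 1 ≤ X.ncard := (Set.ncard_pos (Set.toFinite _)).mpr hX
  have hXc1 : 1 ≤ Xᶜ.ncard := (Set.ncard_pos (Set.toFinite _)).mpr hXc
  -- rule out singletons
  have hXne1 : X.ncard ≠ 1 := by
    intro h1
    obtain ⟨x, rfl⟩ := Set.ncard_eq_one.mp h1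
    have := singleton_cut ends hloop hreg x
    omega
  have hXcne1 : Xᶜ.ncard ≠ 1 := by
    intro h1
    obtain ⟨x, hx⟩ := Set.ncard_eq_one.mp h1
    have := singleton_cut ends hloop hreg x
    rw [← hx, cut_compl] at this
    omega
  have hX2 : X.ncard = 2 := by omega
  have hXc2 : Xᶜ.ncard = 2 := by omega
  -- extract structure
  obtain ⟨a, b, hab, hXab⟩ := Set.ncard_eq_two.mp hX2
  have haX : a ∈ X := by rw [hXab]; exact Set.mem_insert _ _
  have hbX : b ∈ X := by rw [hXab]; exact Set.mem_insert_iff.mpr (Or.inr rfl)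
  obtain ⟨ea, hea, haea⟩ := hAX a haX
  obtain ⟨eb, heb, hbeb⟩ := hAX b hbX
  obtain ⟨ya, hya, heas⟩ : ∃ ya, ya ∉ X ∧ ends ea = s(a, ya) := by
    obtain ⟨u, hu, w, hw, huw⟩ := hea
    rw [huw, Sym2.mem_iff] at haea
    rcases haea with rfl | rfl
    · exact ⟨w, hw, huw⟩
    · exact absurd haX hw
  obtain ⟨yb, hyb, hebs⟩ : ∃ yb, yb ∉ X ∧ ends eb = s(b, yb) := by
    obtain ⟨u, hu, w, hw, huw⟩ := heb
    rw [huw, Sym2.mem_iff] at hbeb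
    rcases hbeb with rfl | rfl
    · exact ⟨w, hw, huw⟩
    · exact absurd hbX hw
  have haya : a ≠ ya := fun h => hya (h ▸ haX)
  have hbyb : b ≠ yb := fun h => hyb (h ▸ hbX)
  have hayb : a ≠ yb := fun h => hyb (h ▸ haX)
  have hbya : b ≠ ya := fun h => hya (h ▸ hbX)
  have heab : ea ≠ eb := by
    intro h
    rw [h, hebs, Sym2.eq_iff] at heas
    rcases heas with ⟨h1, -⟩ | ⟨h1, -⟩
    · exact hab h1.symm
    · exact hbya h1
  have hCutEq : ({ea, eb} : Set E) = Cut ends X := by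
    refine Set.eq_of_subset_of_ncard_le ?_ ?_ (Set.toFinite _)
    · rintro e (rfl | rfl)
      · exact hea
      · exact heb
    · rw [Set.ncard_pair heab]; exact hcut
  have hyayb : ya ≠ yb := by
    intro h
    subst h
    obtain ⟨d, hd, hdya⟩ := Set.exists_ne_of_one_lt_ncard (by omega : 1 < Xᶜ.ncard) ya
    obtain ⟨ed, hed, hded⟩ := hAXc d hd
    rw [← hCutEq] at hed
    have hdX : d ∉ X := hd
    rcases hed with rfl | rfl
    · rw [heas, Sym2.mem_iff] at hded
      rcases hded with rfl | rfl
      · exact hdX haX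
      · exact hdya rfl
    · rw [hebs, Sym2.mem_iff] at hded
      rcases hded with rfl | rfl
      · exact hdX hbX
      · exact hdya rfl
  have hXcab : ({ya, yb} : Set V) = Xᶜ := by
    refine Set.eq_of_subset_of_ncard_le ?_ ?_ (Set.toFinite _)
    · rintro y (rfl | rfl)
      · exact hya
      · exact hyb
    · rw [Set.ncard_pair hyayb]; exact le_of_eq hXc2
  -- remove {a, yb}; then b and ya are separated
  set S : Set V := {a, yb} with hSdef
  have hScard : S.ncard ≤ 2 := le_trans (Set.ncard_insert_le _ _) (by simp)
  have hbS : b ∈ Sᶜ := by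
    simp only [hSdef, Set.mem_compl_iff, Set.mem_insert_iff, Set.mem_singleton_iff]
    push_neg
    exact ⟨fun h => hab h.symm, hbyb⟩
  have hyaS : ya ∈ Sᶜ := by
    simp only [hSdef, Set.mem_compl_iff, Set.mem_insert_iff, Set.mem_singleton_iff]
    push_neg
    exact ⟨fun h => haya h.symm, hyayb⟩
  have hno : ∀ g : E, ends g ≠ s(b, ya) := by
    intro g hg
    have hgcut : g ∈ Cut ends X := (mem_cut_iff hg X).mpr (Or.inl ⟨hbX, hya⟩)
    rw [← hCutEq] at hgcut
    rcases hgcut with rfl | rfl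
    · rw [heas, Sym2.eq_iff] at hg
      rcases hg with ⟨h1, -⟩ | ⟨h1, h2⟩
      · exact hab h1
      · exact hbya h2.symm
    · rw [hebs, Sym2.eq_iff] at hg
      rcases hg with ⟨-, h2⟩ | ⟨h1, -⟩
      · exact hyayb h2.symm
      · exact hbya h1
  have hmem : ∀ u ∈ Sᶜ, u = b ∨ u = ya := by
    intro u hu
    simp only [hSdef, Set.mem_compl_iff, Set.mem_insert_iff, Set.mem_singleton_iff] at hu
    push_neg at hu
    by_cases huX : u ∈ X
    · rw [hXab] at huX
      rcases huX with rfl | rfl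
      · exact absurd rfl hu.1
      · exact Or.inl rfl
    · have huXc : u ∈ ({ya, yb} : Set V) := by rw [hXcab]; exact huX
      rcases huXc with rfl | rfl
      · exact Or.inr rfl
      · exact absurd rfl hu.2
  have hconn := h3c.2 S hScard ⟨b, hbS⟩
  have hreach := hconn.preconnected ⟨b, hbS⟩ ⟨ya, hyaS⟩
  have : ya = b := by
    refine reach_invar ends S (· = b) ?_ _ _ hreach rfl
    rintro p q hp hq ⟨hne, g, hg⟩ rfl
    rcases hmem q hq with rfl | rfl
    · rfl
    · exact absurd hg (hno g)
  exact hbya this.symm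

open Finset in
lemma ncard_eq_sum {α : Type} [Fintype α] (s : Set α) :
    s.ncard = ∑ a : α, if a ∈ s then 1 else 0 := by
  classical
  have h : s.toFinset = Finset.univ.filter (· ∈ s) := by ext x; simp
  rw [Set.ncard_eq_toFinset_card' s, h, Finset.card_filter]

open Finset in
lemma cut_parity [Fintype V] [Fintype E] (ends : E → Sym2 V)
    (hloop : ∀ e, ¬ (ends e).IsDiag) (hreg : ∀ v, deg ends v = 3) (Z : Set V) :
    (Cut ends Z).ncard % 2 = Z.ncard % 2 := by
  classical
  choose A B hne hends using exists_ends_eq ends hloop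
  have hdeg : ∀ v : V, deg ends v = ∑ e : E, if v ∈ ends e then 1 else 0 := by
    intro v
    rw [deg, ncard_eq_sum]
    refine Finset.sum_congr rfl fun e _ => ?_
    simp [Set.mem_setOf_eq]
  have step1 : (∑ v : V, if v ∈ Z then deg ends v else 0) = 3 * Z.ncard := by
    rw [ncard_eq_sum, Finset.mul_sum]
    refine Finset.sum_congr rfl fun v _ => ?_
    by_cases h : v ∈ Z <;> simp [h, hreg v]
  have step2 : (∑ v : V, if v ∈ Z then deg ends v else 0)
      = ∑ e : E, ((if A e ∈ Z then 1 else 0) + (if B e ∈ Z then 1 else 0)) := by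
    have : (∑ v : V, if v ∈ Z then deg ends v else 0)
        = ∑ v : V, ∑ e : E, if v ∈ Z ∧ v ∈ ends e then 1 else 0 := by
      refine Finset.sum_congr rfl fun v _ => ?_
      by_cases h : v ∈ Z
      · simp only [h, if_true, hdeg v, true_and]
      · simp [h]
    rw [this, Finset.sum_comm]
    refine Finset.sum_congr rfl fun e _ => ?_
    have hmem : ∀ v : V, (v ∈ ends e) ↔ (v = A e ∨ v = B e) := by
      intro v; rw [hends e, Sym2.mem_iff]
    have : (∑ v : V, if v ∈ Z ∧ v ∈ ends e then 1 else 0)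
        = ∑ v : V, ((if v = A e then (if v ∈ Z then 1 else 0) else 0)
            + (if v = B e then (if v ∈ Z then 1 else 0) else 0)) := by
      refine Finset.sum_congr rfl fun v _ => ?_
      by_cases h1 : v = A e
      · simp [h1, hmem, hne e]
      · by_cases h2 : v = B e
        · simp [h2, hmem, h1, (hne e).symm]
        · simp [hmem, h1, h2]
    rw [this, Finset.sum_add_distrib, Finset.sum_ite_eq' Finset.univ (A e)
      (fun v => if v ∈ Z then 1 else 0), Finset.sum_ite_eq' Finset.univ (B e)
      (fun v => if v ∈ Z then 1 else 0)]
    simp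
  have step3 : (Cut ends Z).ncard % 2
      = (∑ e : E, ((if A e ∈ Z then 1 else 0) + (if B e ∈ Z then 1 else 0))) % 2 := by
    rw [ncard_eq_sum, Finset.sum_nat_mod, Finset.sum_nat_mod _ 2
      (fun e => (if A e ∈ Z then 1 else 0) + (if B e ∈ Z then 1 else 0))]
    congr 1
    refine Finset.sum_congr rfl fun e _ => ?_
    rw [mem_cut_iff (hends e) Z]
    by_cases h1 : A e ∈ Z <;> by_cases h2 : B e ∈ Z <;> simp [h1, h2]
  rw [step3, ← step2, step1]
  omega

open Finset in
lemma foursum [Fintype V] [Fintype E] (ends : E → Sym2 V)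
    (hloop : ∀ e, ¬ (ends e).IsDiag) (X Y : Set V) :
    (Cut ends (X ∩ Y)).ncard + (Cut ends (X ∪ Y)).ncard
      + (Cut ends (X ∩ Yᶜ)).ncard + (Cut ends (X ∪ Yᶜ)).ncard
      ≤ 2 * ((Cut ends X).ncard + (Cut ends Y).ncard) := by
  classical
  choose A B hne hends using exists_ends_eq ends hloop
  simp only [ncard_eq_sum, ← Finset.sum_add_distrib, ← Finset.mul_sum]
  rw [Finset.mul_sum]
  refine Finset.sum_le_sum fun e _ => ?_
  have h := fun Z => mem_cut_iff (hends e) Z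
  by_cases h1 : A e ∈ X <;> by_cases h2 : A e ∈ Y <;>
    by_cases h3 : B e ∈ X <;> by_cases h4 : B e ∈ Y <;>
    simp [h, Set.mem_inter_iff, Set.mem_union, Set.mem_compl_iff, h1, h2, h3, h4]

lemma matching_aux [Fintype V] [Fintype E] (ends : E → Sym2 V)
    (hloop : ∀ e, ¬ (ends e).IsDiag) (hreg : ∀ v, deg ends v = 3)
    (h3c : ThreeConnected ends) (X : Set V) (h3 : (Cut ends X).ncard = 3)
    (hX : 2 ≤ X.ncard) (hXc : 2 ≤ Xᶜ.ncard) {e f : E}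
    (he : e ∈ Cut ends X) (hf : f ∈ Cut ends X) (hef : e ≠ f)
    {v : V} (hv : v ∈ X) (hve : v ∈ ends e) (hvf : v ∈ ends f) : False := by
  set X' : Set V := X \ {v} with hX'
  have hX'ne : X'.Nonempty := by
    obtain ⟨u, hu, huv⟩ := Set.exists_ne_of_one_lt_ncard (by omega : 1 < X.ncard) v
    exact ⟨u, hu, huv⟩
  have hX'c : X'ᶜ.Nonempty := by
    obtain ⟨w, hw⟩ := (Set.ncard_pos (Set.toFinite _)).mp (by omega : 0 < Xᶜ.ncard)
    exact ⟨w, fun h => hw h.1⟩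
  have hnotcut : ∀ g ∈ Cut ends X, v ∈ ends g → g ∉ Cut ends X' := by
    rintro g hg hvg ⟨p, hp, q, hq, hpq⟩
    rw [hpq, Sym2.mem_iff] at hvg
    rcases hvg with rfl | rfl
    · exact hp.2 rfl
    · rcases (mem_cut_iff hpq X).mp hg with ⟨-, h2⟩ | ⟨-, h2⟩
      · exact h2 hv
      · exact h2 hp.1
  have hsub : Cut ends X' ⊆ (Cut ends X \ {e, f}) ∪ ({g | v ∈ ends g} \ {e, f}) := by
    intro g hg
    have hgef : g ∉ ({e, f} : Set E) := by
      rintro (rfl | rfl)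
      · exact hnotcut g he hve hg
      · exact hnotcut g hf hvf hg
    by_cases hvg : v ∈ ends g
    · exact Or.inr ⟨hvg, hgef⟩
    · obtain ⟨p, hp, q, hq, hpq⟩ := hg
      refine Or.inl ⟨⟨p, hp.1, q, ?_, hpq⟩, hgef⟩
      intro hqX
      apply hq
      refine ⟨hqX, ?_⟩
      rintro rfl
      exact hvg (hpq ▸ Sym2.mem_mk_right p q)
  have hcard1 : (Cut ends X \ {e, f}).ncard ≤ 1 := by
    rw [Set.ncard_diff (by rintro g (rfl | rfl); exacts [he, hf]) (Set.toFinite _)]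
    rw [Set.ncard_pair hef, h3]
  have hcard2 : ({g | v ∈ ends g} \ {e, f} : Set E).ncard ≤ 1 := by
    rw [Set.ncard_diff (by rintro g (rfl | rfl); exacts [hve, hvf]) (Set.toFinite _)]
    rw [Set.ncard_pair hef]
    have : ({g | v ∈ ends g} : Set E).ncard = 3 := hreg v
    omega
  have := edgeconn ends hloop hreg h3c X' hX'ne hX'c
  have hle : (Cut ends X').ncard ≤ 2 := by
    calc (Cut ends X').ncard ≤ _ := Set.ncard_le_ncard hsub (Set.toFinite _)
      _ ≤ (Cut ends X \ {e, f}).ncard + ({g | v ∈ ends g} \ {e, f} : Set E).ncard :=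
        Set.ncard_union_le _ _
      _ ≤ 2 := by omega
  omega

end proofs

/-- In a 3-connected 3-regular multigraph: every nontrivial 3-cut is a matching
(no two of its edges share a vertex), and any two 3-cuts are laminar (some
quadrant of their shores is empty). -/
theorem stmt15 {V E : Type} [Fintype V] [Fintype E]
    (ends : E → Sym2 V) (hloop : ∀ e, ¬ (ends e).IsDiag)
    (hreg : ∀ v, deg ends v = 3) (h3c : ThreeConnected ends) :
    (∀ X : Set V, (Cut ends X).ncard = 3 → 2 ≤ X.ncard → 2 ≤ Xᶜ.ncard →
        ∀ e ∈ Cut ends X, ∀ f ∈ Cut ends X, e ≠ f →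
          ∀ v : V, ¬ (v ∈ ends e ∧ v ∈ ends f)) ∧
      (∀ X Y : Set V, (Cut ends X).ncard = 3 → (Cut ends Y).ncard = 3 →
        X ∩ Y = ∅ ∨ X ∩ Yᶜ = ∅ ∨ Xᶜ ∩ Y = ∅ ∨ Xᶜ ∩ Yᶜ = ∅) := by
  constructor
  · intro X h3 hX hXc e he f hf hef v hvef
    obtain ⟨hve, hvf⟩ := hvef
    by_cases hv : v ∈ X
    · exact matching_aux ends hloop hreg h3c X h3 hX hXc he hf hef hv hve hvf
    · refine matching_aux ends hloop hreg h3c Xᶜ ?_ hXc ?_ ?_ ?_ hef hv hve hvf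
      · rw [cut_compl]; exact h3
      · rw [compl_compl]; exact hX
      · rw [cut_compl]; exact he
      · rw [cut_compl]; exact hf
  · intro X Y hX3 hY3
    by_contra hcon
    push_neg at hcon
    obtain ⟨h1, h2, h3, h4⟩ := hcon
    obtain ⟨w1, hw1⟩ := h1
    obtain ⟨w2, hw2⟩ := h2
    obtain ⟨w3, hw3⟩ := h3
    obtain ⟨w4, hw4⟩ := h4
    have c1 := edgeconn ends hloop hreg h3c (X ∩ Y) ⟨w1, hw1⟩
      ⟨w4, fun h => hw4.1 h.1⟩
    have c2 := edgeconn ends hloop hreg h3c (X ∪ Y) ⟨w1, Or.inl hw1.1⟩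
      ⟨w4, fun h => h.elim (fun h' => hw4.1 h') (fun h' => hw4.2 h')⟩
    have c3 := edgeconn ends hloop hreg h3c (X ∩ Yᶜ) ⟨w2, hw2⟩
      ⟨w3, fun h => hw3.1 h.1⟩
    have c4 := edgeconn ends hloop hreg h3c (X ∪ Yᶜ) ⟨w2, Or.inl hw2.1⟩
      ⟨w3, fun h => h.elim (fun h' => hw3.1 h') (fun h' => h' hw3.2)⟩
    have hsum := foursum ends hloop X Y
    rw [hX3, hY3] at hsum
    have e1 : (Cut ends (X ∩ Y)).ncard = 3 := by omega
    have e3 : (Cut ends (X ∩ Yᶜ)).ncard = 3 := by omega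
    have p1 := cut_parity ends hloop hreg (X ∩ Y)
    rw [e1] at p1
    have p3 := cut_parity ends hloop hreg (X ∩ Yᶜ)
    rw [e3] at p3
    have pX := cut_parity ends hloop hreg X
    rw [hX3] at pX
    have hsplit : (X ∩ Y).ncard + (X \ Y).ncard = X.ncard :=
      Set.ncard_inter_add_ncard_diff_eq_ncard X Y (Set.toFinite _)
    rw [Set.diff_eq] at hsplit
    omega
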